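/- Let p ≥ 1, d ≥ 2 be integers, let w ∈ ℂ∖{0} satisfy w^{d^p} = w, and let I = (i_1,…,i_n) be a multi-index with I_k denoting I with its k-th entry replaced by 0. Fix a point w₀ = (w_1,…,w_n) ∈ (ℂ*)^n periodic of period p for F₀(z) = (z_1^d,…,z_n^d). Then the quantity (i_k d^{p−1} − d^p) · Σ_{i=0}^{p−1} (w₀^{I_k})^{d^i} · w_k^{d^i(i_k − d)} can be written as w_k^{−d^{p−1}} · Q(w₀), where Q is a polynomial in (z_1,…,z_n) whose degree in z_j equals i_j·d^{p−1} for j ≠ k, and whose degree in z_k equals (i_k+1)·d^{p−1} − 1 if 0 ≤ i_k ≤ d−2, and d^{p−1} − 1 if i_k = d−1 (assuming the multi-index is admissible, i.e., i_j ≤ d−1 for all j and I ≠ 0). -/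

import Mathlib

theorem stmt13 (n d p : ℕ) (hd : 2 ≤ d) (hp : 1 ≤ p) (k : Fin n)
    (I : Fin n → ℕ) (hadm : ∀ j, I j ≤ d - 1) (hI0 : I ≠ (fun _ => 0)) :
    ∃ Q : MvPolynomial (Fin n) ℂ,
      (∀ j, j ≠ k → Q.degreeOf j = I j * d ^ (p - 1)) ∧
      (Q.degreeOf k = if I k = d - 1 then d ^ (p - 1) - 1 else (I k + 1) * d ^ (p - 1) - 1) ∧
      ∀ w : Fin n → ℂ, (∀ j, w j ≠ 0) → (∀ j, (w j) ^ (d ^ p) = w j) →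
        ((I k : ℂ) * (d : ℂ) ^ (p - 1) - (d : ℂ) ^ p) *
          ∑ i ∈ Finset.range p,
            (∏ j ∈ Finset.univ.erase k, (w j) ^ (I j)) ^ (d ^ i) *
            (w k) ^ ((d : ℤ) ^ i * ((I k : ℤ) - (d : ℤ))) =
        ((w k)⁻¹) ^ (d ^ (p - 1)) * MvPolynomial.eval w Q := by
  classical
  obtain ⟨m, rfl⟩ : ∃ m, p = m + 1 := ⟨p - 1, by omega⟩
  simp only [Nat.add_sub_cancel]
  have hIkd : I k < d := by have := hadm k; omega
  -- exponents
  set e : ℕ → ℕ := fun i =>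
    if i = m then (if I k = d - 1 then 0 else (I k + 1) * d ^ m - 1)
    else d ^ m - d ^ i * (d - I k) with he
  set c : ℂ := (I k : ℂ) * (d : ℂ) ^ m - (d : ℂ) ^ (m + 1) with hc
  have hcnat : (I k) * d ^ m < d ^ (m + 1) := by
    calc I k * d ^ m < d * d ^ m := by
          exact (Nat.mul_lt_mul_right (Nat.pow_pos (n := m) (by omega))).mpr hIkd
      _ = d ^ (m + 1) := by ring
  have hc0 : c ≠ 0 := by
    have : ((I k * d ^ m : ℕ) : ℂ) ≠ ((d ^ (m + 1) : ℕ) : ℂ) := by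
      exact_mod_cast (Nat.ne_of_lt hcnat)
    rw [hc, sub_ne_zero]
    push_cast at this ⊢
    exact this
  set E : ℕ → (Fin n →₀ ℕ) := fun i =>
    Finsupp.equivFunOnFinite.symm (fun j => if j = k then e i else I j * d ^ i) with hE
  have hEapp : ∀ i j, E i j = if j = k then e i else I j * d ^ i := by
    intro i j; rw [hE]; simp
  set Q : MvPolynomial (Fin n) ℂ := ∑ i ∈ Finset.range (m + 1), MvPolynomial.monomial (E i) c
    with hQ
  -- basic bounds
  have hbd : ∀ i, i < m → d ^ i * (d - I k) ≤ d ^ m := by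
    intro i hi
    calc d ^ i * (d - I k) ≤ d ^ i * d := Nat.mul_le_mul_left _ (by omega)
      _ = d ^ (i + 1) := by ring
      _ ≤ d ^ m := Nat.pow_le_pow_right (by omega) (by omega)
  have hei : ∀ i, i < m → e i = d ^ m - d ^ i * (d - I k) := by
    intro i hi; rw [he]; simp [Nat.ne_of_lt hi]
  have hem : e m = if I k = d - 1 then 0 else (I k + 1) * d ^ m - 1 := by rw [he]; simp
  -- strict monotonicity facts
  have hstrict : ∀ i j, i < j → j < m → e j < e i := by
    intro i j hij hj
    rw [hei i (lt_trans hij hj), hei j hj]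
    have h1 : d ^ i * (d - I k) < d ^ j * (d - I k) :=
      (Nat.mul_lt_mul_right (by omega)).mpr (Nat.pow_lt_pow_right (by omega) hij)
    have h2 := hbd j hj
    omega
  have hsep : ∀ i, i < m → e i ≠ e m := by
    intro i hi
    rw [hei i hi, hem]
    by_cases hk : I k = d - 1
    · rw [if_pos hk]
      have h0 : d - I k = 1 := by omega
      have h1 : d ^ i * (d - I k) = d ^ i := by rw [h0, mul_one]
      have h2 : d ^ i < d ^ m := Nat.pow_lt_pow_right (by omega) hi
      omega
    · rw [if_neg hk]
      have h2 : 2 ≤ d - I k := by omega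
      have h3 : d - I k ≤ d ^ i * (d - I k) := Nat.le_mul_of_pos_left _ (Nat.pow_pos (n := i) (by omega))
      have h4 : d ^ m ≤ (I k + 1) * d ^ m := Nat.le_mul_of_pos_left _ (by omega)
      have h5 := hbd i hi
      have h6 : 1 ≤ d ^ m := Nat.one_le_pow _ _ (by omega)
      omega
  have hinj : ∀ i, i < m + 1 → ∀ j, j < m + 1 → e i = e j → i = j := by
    intro i hi j hj hij
    by_contra hne
    rcases Nat.lt_or_ge i m with hi' | hi' <;> rcases Nat.lt_or_ge j m with hj' | hj'
    · rcases Nat.lt_trichotomy i j with h | h | h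
      · exact absurd hij (Nat.ne_of_gt (hstrict i j h hj'))
      · exact hne h
      · exact absurd hij (Nat.ne_of_lt (hstrict j i h hi'))
    · have : j = m := by omega
      subst this; exact hsep i hi' hij
    · have : i = m := by omega
      subst this; exact hsep j hj' hij.symm
    · omega
  have hEinj : ∀ i, i < m + 1 → ∀ j, j < m + 1 → E i = E j → i = j := by
    intro i hi j hj hij
    apply hinj i hi j hj
    have h3 := DFunLike.congr_fun hij k
    rwa [hEapp, hEapp, if_pos rfl, if_pos rfl] at h3
  -- coefficients and support
  have hcoeff : ∀ l, l < m + 1 → Q.coeff (E l) = c := by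
    intro l hl
    rw [hQ, MvPolynomial.coeff_sum]
    rw [Finset.sum_eq_single l]
    · rw [MvPolynomial.coeff_monomial, if_pos rfl]
    · intro i hi hne
      rw [MvPolynomial.coeff_monomial, if_neg]
      intro h
      exact hne (hEinj i (Finset.mem_range.mp hi) l hl h)
    · intro h; exact absurd (Finset.mem_range.mpr hl) h
  have hsupp : ∀ l, l < m + 1 → E l ∈ Q.support := by
    intro l hl
    rw [MvPolynomial.mem_support_iff, hcoeff l hl]
    exact hc0
  have hsub : ∀ μ ∈ Q.support, ∃ i, i < m + 1 ∧ E i = μ := by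
    intro μ hμ
    rw [MvPolynomial.mem_support_iff] at hμ
    by_contra h
    push_neg at h
    apply hμ
    rw [hQ, MvPolynomial.coeff_sum]
    apply Finset.sum_eq_zero
    intro i hi
    rw [MvPolynomial.coeff_monomial, if_neg (h i (Finset.mem_range.mp hi))]
  have hdeg : ∀ (j : Fin n) (b : ℕ), (∀ i, i < m + 1 → E i j ≤ b) →
      (∃ i, i < m + 1 ∧ E i j = b) → Q.degreeOf j = b := by
    intro j b hub ⟨i, hi, hie⟩
    rw [MvPolynomial.degreeOf_eq_sup]
    apply le_antisymm
    · apply Finset.sup_le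
      intro μ hμ
      obtain ⟨i', hi', rfl⟩ := hsub μ hμ
      exact hub i' hi'
    · rw [← hie]
      exact Finset.le_sup (f := fun μ => μ j) (hsupp i hi)
  refine ⟨Q, ?_, ?_, ?_⟩
  · -- degrees for j ≠ k
    intro j hj
    apply hdeg
    · intro i hi
      rw [hEapp, if_neg hj]
      exact Nat.mul_le_mul_left _ (Nat.pow_le_pow_right (by omega) (by omega))
    · exact ⟨m, by omega, by rw [hEapp, if_neg hj]⟩
  · -- degree for k
    apply hdeg
    · intro i hi
      rw [hEapp, if_pos rfl]
      rcases Nat.lt_or_ge i m with hi' | hi'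
      · rw [hei i hi']
        have hx : 0 < d ^ i * (d - I k) :=
          Nat.mul_pos (Nat.pow_pos (n := i) (by omega)) (by omega)
        have h6 : 1 ≤ d ^ m := Nat.one_le_pow _ _ (by omega)
        by_cases hk : I k = d - 1
        · rw [if_pos hk]; omega
        · rw [if_neg hk]
          have h4 : d ^ m ≤ (I k + 1) * d ^ m := Nat.le_mul_of_pos_left _ (by omega)
          omega
      · have : i = m := by omega
        subst this
        rw [hem]
        by_cases hk : I k = d - 1 <;> simp [hk]
    · by_cases hk : I k = d - 1
      · -- max achieved at i = 0
        rcases Nat.eq_zero_or_pos m with hm | hm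
        · exact ⟨m, by omega, by rw [hEapp, if_pos rfl, hem, if_pos hk, hm]; simp [hk]⟩
        · refine ⟨0, by omega, ?_⟩
          rw [hEapp, if_pos rfl, hei 0 hm, if_pos hk]
          have h0 : d - I k = 1 := by omega
          rw [h0, pow_zero, mul_one]
      · exact ⟨m, by omega, by rw [hEapp, if_pos rfl, hem, if_neg hk, if_neg hk]⟩
  · -- the evaluation identity
    intro w hw0 hper
    have hwk := hw0 k
    -- periodicity consequence
    have honeN : w k ^ (d ^ (m + 1) - 1) = 1 := by
      have h1 : w k ^ (d ^ (m + 1)) = w k := hper k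
      have h2 : d ^ (m + 1) = (d ^ (m + 1) - 1) + 1 := by
        have : 1 ≤ d ^ (m + 1) := Nat.one_le_pow _ _ (by omega)
        omega
      rw [h2, pow_succ] at h1
      field_simp at h1
      exact h1
    have honeZ : w k ^ ((d : ℤ) ^ (m + 1) - 1) = 1 := by
      have : ((d : ℤ) ^ (m + 1) - 1) = ((d ^ (m + 1) - 1 : ℕ) : ℤ) := by
        have : 1 ≤ d ^ (m + 1) := Nat.one_le_pow _ _ (by omega)
        push_cast [this]; ring
      rw [this, zpow_natCast, honeN]
    -- evaluate Q
    have hevalQ : MvPolynomial.eval w Q =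
        ∑ i ∈ Finset.range (m + 1),
          c * ((∏ j ∈ Finset.univ.erase k, w j ^ (I j * d ^ i)) * w k ^ (e i)) := by
      rw [hQ, map_sum]
      apply Finset.sum_congr rfl
      intro i _
      rw [MvPolynomial.eval_monomial]
      congr 1
      rw [Finsupp.prod_fintype _ _ (fun j => pow_zero _)]
      rw [← Finset.mul_prod_erase Finset.univ _ (Finset.mem_univ k)]
      rw [mul_comm]
      congr 1
      · apply Finset.prod_congr rfl
        intro j hj
        rw [hEapp, if_neg (Finset.mem_erase.mp hj).1]
      · rw [hEapp, if_pos rfl]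
    rw [hevalQ, Finset.mul_sum, Finset.mul_sum]
    apply Finset.sum_congr rfl
    intro i hi
    rw [Finset.mem_range] at hi
    have hP : (∏ j ∈ Finset.univ.erase k, w j ^ (I j)) ^ (d ^ i)
        = ∏ j ∈ Finset.univ.erase k, w j ^ (I j * d ^ i) := by
      rw [← Finset.prod_pow]
      apply Finset.prod_congr rfl
      intro j _
      rw [← pow_mul]
    have hkey : (w k) ^ ((d : ℤ) ^ i * ((I k : ℤ) - (d : ℤ)))
        = ((w k)⁻¹) ^ (d ^ m) * w k ^ (e i) := by
      have hrhs : ((w k)⁻¹) ^ (d ^ m) * w k ^ (e i)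
          = w k ^ ((e i : ℤ) - (d : ℤ) ^ m) := by
        calc ((w k)⁻¹) ^ (d ^ m) * w k ^ (e i)
            = w k ^ (-((d ^ m : ℕ) : ℤ)) * w k ^ ((e i : ℕ) : ℤ) := by
              rw [zpow_neg, zpow_natCast, zpow_natCast, inv_pow]
          _ = w k ^ ((e i : ℤ) - (d : ℤ) ^ m) := by
              rw [← zpow_add₀ hwk]
              congr 1
              push_cast
              ring
      rw [hrhs]
      rcases Nat.lt_or_ge i m with hi' | hi'
      · congr 1
        rw [hei i hi']
        have h1 := hbd i hi'
        have h2 : I k ≤ d := by omega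
        push_cast [h1, h2]
        ring
      · have him : i = m := by omega
        rw [him, hem]
        by_cases hk : I k = d - 1
        · rw [if_pos hk]
          congr 1
          have : (I k : ℤ) = (d : ℤ) - 1 := by
            have : I k + 1 = d := by omega
            push_cast [← this]; ring
          rw [this]
          push_cast
          ring
        · rw [if_neg hk]
          have hge1 : 1 ≤ (I k + 1) * d ^ m := by
            have : 1 ≤ d ^ m := Nat.one_le_pow _ _ (by omega)
            have : 1 ≤ I k + 1 := by omega
            nlinarith [Nat.one_le_pow m d (by omega : 0 < d)]
          have hexp : (((I k + 1) * d ^ m - 1 : ℕ) : ℤ) - (d : ℤ) ^ m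
              = (d : ℤ) ^ m * ((I k : ℤ) - (d : ℤ)) + ((d : ℤ) ^ (m + 1) - 1) := by
            push_cast [hge1]
            ring
          rw [hexp, zpow_add₀ hwk, honeZ, mul_one]
    rw [hP, hkey]
    ring
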